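/- Let n ≥ 2k and r ≥ 2. If F_1, F_2, ..., F_r ⊆ C([n],k) are nonempty pairwise cross-intersecting families, then Σ_{i=1}^r |F_i| ≤ max{ C(n,k) − C(n−k,k) + r − 1, r·C(n−1,k−1) }. -/

import Mathlib

set_option maxHeartbeats 1000000

attribute [-instance] instDecidableEqFin

open Finset

open scoped FinsetFamily


def Intersecting (t : ℕ) (𝓕 : Finset (Finset ℕ)) : Prop :=
  ∀ A ∈ 𝓕, ∀ B ∈ 𝓕, t ≤ (A ∩ B).card

def IsCover (n t : ℕ) (𝓕 : Finset (Finset ℕ)) (S : Finset ℕ) : Prop :=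
  S ⊆ Finset.range n ∧ ∀ A ∈ 𝓕, t ≤ (S ∩ A).card

noncomputable def tau (n t : ℕ) (𝓕 : Finset (Finset ℕ)) : ℕ :=
  sInf {m | ∃ S, IsCover n t 𝓕 S ∧ S.card = m}

open Classical in
noncomputable def minCovers (n t : ℕ) (𝓕 : Finset (Finset ℕ)) : Finset (Finset ℕ) :=
  ((Finset.range n).powerset).filter
    (fun S => (∀ A ∈ 𝓕, t ≤ (S ∩ A).card) ∧ S.card = tau n t 𝓕)

def MaximalIntersecting (n k t : ℕ) (𝓕 : Finset (Finset ℕ)) : Prop :=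
  𝓕 ⊆ (Finset.range n).powersetCard k ∧ Intersecting t 𝓕 ∧
    ∀ 𝓖 : Finset (Finset ℕ), 𝓖 ⊆ (Finset.range n).powersetCard k →
      Intersecting t 𝓖 → 𝓕 ⊆ 𝓖 → 𝓖 = 𝓕

section AuxLemmas

private lemma pascal {t k : ℕ} (hk : 1 ≤ k) : (t+1).choose k = t.choose k + t.choose (k-1) := by
  obtain ⟨j, rfl⟩ : ∃ j, k = j + 1 := ⟨k-1, by omega⟩
  simp [Nat.choose_succ_succ, Nat.add_comm]

private lemma choose_cross {a b s t : ℕ} (hab : a ≤ b) (hbs : b ≤ s) (hst : s ≤ t) :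
    t.choose a * s.choose b ≤ t.choose b * s.choose a := by
  have hbt : b ≤ t := hbs.trans hst
  have h1 : t.choose b * b.choose a = t.choose a * (t-a).choose (b-a) := Nat.choose_mul hab
  have h2 : s.choose b * b.choose a = s.choose a * (s-a).choose (b-a) := Nat.choose_mul (n := s) hab
  have hpos : 0 < (t-a).choose (b-a) := Nat.choose_pos (by omega)
  have hmono : (s-a).choose (b-a) ≤ (t-a).choose (b-a) := Nat.choose_le_choose _ (by omega)
  have key : t.choose a * s.choose b * (t-a).choose (b-a) ≤ t.choose b * s.choose a * (t-a).choose (b-a) := by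
    calc t.choose a * s.choose b * (t-a).choose (b-a)
        = t.choose a * (t-a).choose (b-a) * s.choose b := by ring
      _ = t.choose b * b.choose a * s.choose b := by rw [h1]
      _ = t.choose b * (s.choose b * b.choose a) := by ring
      _ = t.choose b * (s.choose a * (s-a).choose (b-a)) := by rw [h2]
      _ ≤ t.choose b * (s.choose a * (t-a).choose (b-a)) := by
          exact Nat.mul_le_mul_left _ (Nat.mul_le_mul_left _ hmono)
      _ = t.choose b * s.choose a * (t-a).choose (b-a) := by ring
  exact Nat.le_of_mul_le_mul_right key hpos

private lemma slope_right {k l s t : ℕ} (hk : 1 ≤ k) (hkl : k ≤ l) (hls : l ≤ s) (hst : s ≤ t) :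
    t.choose k * s.choose (l-1) + s.choose l * s.choose (k-1)
      ≤ t.choose l * s.choose (k-1) + s.choose k * s.choose (l-1) := by
  induction t, hst using Nat.le_induction with
  | base => exact le_of_eq (by ring)
  | succ t hst ih =>
    have hcross : t.choose (k-1) * s.choose (l-1) ≤ t.choose (l-1) * s.choose (k-1) :=
      choose_cross (by omega) (by omega) hst
    rw [pascal hk, pascal (hk.trans hkl)]
    nlinarith [ih]

private lemma slope_left {k l u s : ℕ} (hk : 1 ≤ k) (hkl : k ≤ l) (hlu : l ≤ u) (hus : u ≤ s) :
    u.choose k * s.choose (l-1) + s.choose l * s.choose (k-1)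
      ≤ s.choose k * s.choose (l-1) + u.choose l * s.choose (k-1) := by
  obtain ⟨d, rfl⟩ : ∃ d, s = u + d := ⟨s - u, by omega⟩
  clear hus
  induction d generalizing u with
  | zero => exact le_of_eq (by ring)
  | succ d ih =>
    have h := ih (u := u + 1) (by omega)
    have hcross : (u+d+1).choose (k-1) * u.choose (l-1) ≤ (u+d+1).choose (l-1) * u.choose (k-1) :=
      choose_cross (by omega) (by omega) (by omega)
    have hpk : (u+1).choose k = u.choose k + u.choose (k-1) := pascal hk
    have hpl : (u+1).choose l = u.choose l + u.choose (l-1) := pascal (hk.trans hkl)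
    have he : u + 1 + d = u + d + 1 := by omega
    rw [he] at h
    have he2 : u + (d+1) = u + d + 1 := rfl
    rw [he2]
    nlinarith [h, hpk, hpl, hcross]

private lemma lym_cover {α : Type*} [DecidableEq α] {S : Finset α} {a b : ℕ} (hab : a ≤ b)
    (ℬ : Finset (Finset α)) (hB : ∀ B ∈ ℬ, B ⊆ S ∧ B.card = b) :
    ℬ.card * S.card.choose a
      ≤ #((S.powersetCard a).filter (fun A => ∃ B ∈ ℬ, A ⊆ B)) * S.card.choose b := by
  rcases ℬ.eq_empty_or_nonempty with rfl | ⟨B₀, hB₀⟩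
  · simp
  have hbs : b ≤ S.card := by
    rw [← (hB B₀ hB₀).2]; exact card_le_card (hB B₀ hB₀).1
  set cover := (S.powersetCard a).filter (fun A => ∃ B ∈ ℬ, A ⊆ B) with hcover
  -- double counting
  have step1 : ∑ B ∈ ℬ, #(B.powersetCard a) = ℬ.card * b.choose a := by
    rw [Finset.sum_congr rfl (fun B hBm => ?_), Finset.sum_const, smul_eq_mul]
    rw [card_powersetCard, (hB B hBm).2]
  have step2 : ∑ B ∈ ℬ, #(B.powersetCard a) = ∑ A ∈ cover, #(ℬ.filter (fun B => A ⊆ B)) := by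
    rw [← card_sigma, ← card_sigma]
    apply Finset.card_bij (fun x _ => (⟨x.2, x.1⟩ : (_ : Finset α) × Finset α))
    · rintro ⟨B, A⟩ hx
      simp only [mem_sigma, mem_powersetCard] at hx ⊢
      obtain ⟨hBm, hAB, hAcard⟩ := hx
      refine ⟨?_, ?_⟩
      · rw [hcover, mem_filter, mem_powersetCard]
        exact ⟨⟨hAB.trans (hB B hBm).1, hAcard⟩, B, hBm, hAB⟩
      · rw [mem_filter]; exact ⟨hBm, hAB⟩
    · rintro ⟨B, A⟩ hx ⟨B', A'⟩ hx' h
      simpa [Sigma.ext_iff, and_comm] using h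
    · rintro ⟨A, B⟩ hx
      simp only [mem_sigma, mem_filter, mem_powersetCard] at hx
      refine ⟨⟨B, A⟩, ?_, rfl⟩
      simp only [mem_sigma, mem_powersetCard]
      exact ⟨hx.2.1, hx.2.2, (mem_powersetCard.1 (mem_filter.1 hx.1).1).2⟩
  have step3 : ∀ A ∈ cover, #(ℬ.filter (fun B => A ⊆ B)) ≤ (S.card - a).choose (b - a) := by
    intro A hA
    rw [hcover, mem_filter, mem_powersetCard] at hA
    obtain ⟨⟨hAS, hAcard⟩, _⟩ := hA
    have : #((S \ A).powersetCard (b - a)) = (S.card - a).choose (b-a) := by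
      rw [card_powersetCard, card_sdiff_of_subset hAS, hAcard]
    rw [← this]
    apply card_le_card_of_injOn (fun B => B \ A)
    · intro B hBm
      rw [mem_coe, mem_filter] at hBm
      rw [mem_coe, mem_powersetCard]
      exact ⟨sdiff_subset_sdiff (hB B hBm.1).1 le_rfl,
        by rw [card_sdiff_of_subset hBm.2, (hB B hBm.1).2, hAcard]⟩
    · intro B hBm B' hBm' h
      rw [coe_filter] at hBm hBm'
      have h1 : B \ A ∪ A = B := sdiff_union_of_subset hBm.2
      have h2 : B' \ A ∪ A = B' := sdiff_union_of_subset hBm'.2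
      rw [← h1, ← h2]; simp only at h; rw [h]
  have step4 : ℬ.card * b.choose a ≤ cover.card * (S.card - a).choose (b - a) := by
    rw [← step1, step2]
    calc ∑ A ∈ cover, #(ℬ.filter (fun B => A ⊆ B))
        ≤ ∑ _A ∈ cover, (S.card - a).choose (b - a) := Finset.sum_le_sum step3
      _ = cover.card * (S.card - a).choose (b - a) := by rw [Finset.sum_const, smul_eq_mul]
  have hpos : 0 < (S.card - a).choose (b - a) := Nat.choose_pos (by omega)
  have key : ℬ.card * S.card.choose a * (S.card - a).choose (b - a)
      ≤ cover.card * S.card.choose b * (S.card - a).choose (b - a) := by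
    calc ℬ.card * S.card.choose a * (S.card - a).choose (b - a)
        = ℬ.card * (S.card.choose a * (S.card - a).choose (b - a)) := by ring
      _ = ℬ.card * (S.card.choose b * b.choose a) := by rw [← Nat.choose_mul (n := S.card) hab]
      _ = (ℬ.card * b.choose a) * S.card.choose b := by ring
      _ ≤ (cover.card * (S.card - a).choose (b - a)) * S.card.choose b :=
          Nat.mul_le_mul_right _ step4
      _ = cover.card * S.card.choose b * (S.card - a).choose (b - a) := by ring
  exact Nat.le_of_mul_le_mul_right key hpos

private def lows (n s : ℕ) : Finset (Fin n) := univ.filter (fun i => (i : ℕ) < s)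

private lemma mem_lows {n s : ℕ} {x : Fin n} : x ∈ lows n s ↔ (x : ℕ) < s := by
  simp [lows]

private lemma card_lows {n s : ℕ} (h : s ≤ n) : (lows n s).card = s := by
  have key : (lows n s).card = (range s).card := by
    apply Finset.card_bij (fun (i : Fin n) _ => (i : ℕ))
    · intro a ha; rw [mem_range]; exact mem_lows.1 ha
    · intro a _ b _ hab; exact Fin.val_injective hab
    · intro b hb
      rw [mem_range] at hb
      exact ⟨⟨b, lt_of_lt_of_le hb h⟩, mem_lows.2 hb, rfl⟩
  rw [key, card_range]

private lemma exists_initSeg (n l m : ℕ) (hm : m ≤ n.choose l) :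
    ∃ 𝒞 : Finset (Finset (Fin n)), Colex.IsInitSeg 𝒞 l ∧ 𝒞.card = m := by
  induction m with
  | zero => exact ⟨∅, by simp, rfl⟩
  | succ m ih =>
    obtain ⟨𝒞, hseg, hcard⟩ := ih (by omega)
    have hne : ((univ.powersetCard l : Finset (Finset (Fin n))) \ 𝒞).Nonempty := by
      rw [sdiff_nonempty]
      intro hcon
      have := card_le_card hcon
      rw [card_powersetCard, card_univ, Fintype.card_fin] at this; omega
    obtain ⟨A, hA, hmin⟩ := Finset.exists_min_image _ (fun A => toColex A) hne
    rw [mem_sdiff, mem_powersetCard] at hA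
    refine ⟨insert A 𝒞, ⟨?_, ?_⟩, ?_⟩
    · intro B hB
      rw [coe_insert, Set.mem_insert_iff] at hB
      rcases hB with rfl | hB
      · exact hA.1.2
      · exact hseg.1 hB
    · rintro s t hs ⟨hlt, htcard⟩
      rcases mem_insert.1 hs with rfl | hs𝒞
      · by_cases ht : t ∈ 𝒞
        · exact mem_insert_of_mem ht
        · have htmem : t ∈ univ.powersetCard l \ 𝒞 := by
            rw [mem_sdiff, mem_powersetCard]; exact ⟨⟨subset_univ _, htcard⟩, ht⟩
          exact absurd hlt (not_lt.2 (hmin t htmem))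
      · exact mem_insert_of_mem (hseg.2 hs𝒞 ⟨hlt, htcard⟩)
    · rw [card_insert_of_notMem hA.2, hcard]

private lemma initSeg_mem_of_low {n l s : ℕ} (hsn : s ≤ n) {𝒞 : Finset (Finset (Fin n))}
    (h : Colex.IsInitSeg 𝒞 l) (hcard : s.choose l ≤ 𝒞.card) {A : Finset (Fin n)}
    (hAs : A ⊆ lows n s) (hAcard : A.card = l) : A ∈ 𝒞 := by
  by_contra hA
  have hall : ∀ C ∈ 𝒞, toColex C < toColex A := by
    intro C hC
    rcases lt_trichotomy (toColex C) (toColex A) with h1|h1|h1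
    · exact h1
    · exact absurd (toColex_inj.1 h1 ▸ hC) hA
    · exact absurd (h.2 hC ⟨h1, hAcard⟩) hA
  have hsub : ∀ C ∈ 𝒞, C ⊆ lows n s := by
    intro C hC x hx
    rw [mem_lows]
    by_contra hxs
    have hxA : x ∉ A := fun hxA => hxs (mem_lows.1 (hAs hxA))
    obtain ⟨-, hforall⟩ := Colex.toColex_lt_toColex.1 (hall C hC)
    obtain ⟨b, hb, -, hxb⟩ := hforall hx hxA
    have : (b : ℕ) < s := mem_lows.1 (hAs hb)
    have : (x : ℕ) ≤ (b : ℕ) := hxb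
    omega
  have hsub2 : 𝒞 ⊆ ((lows n s).powersetCard l).erase A := by
    intro C hC
    rw [mem_erase, mem_powersetCard]
    exact ⟨fun hCA => hA (hCA ▸ hC), hsub C hC, h.1 hC⟩
  have hle := card_le_card hsub2
  have hApos : 0 < ((lows n s).powersetCard l).card :=
    card_pos.2 ⟨A, by rw [mem_powersetCard]; exact ⟨hAs, hAcard⟩⟩
  rw [card_erase_of_mem (by rw [mem_powersetCard]; exact ⟨hAs, hAcard⟩)] at hle
  rw [card_powersetCard, card_lows hsn] at hle hApos
  omega

private lemma initSeg_subset_low {n l s : ℕ} (hsn : s + 1 ≤ n) {𝒞 : Finset (Finset (Fin n))}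
    (h : Colex.IsInitSeg 𝒞 l) (hcard : 𝒞.card ≤ (s+1).choose l) :
    ∀ A ∈ 𝒞, A ⊆ lows n (s+1) := by
  intro A hA
  by_contra hsub
  obtain ⟨x, hxA, hxs⟩ := not_subset.1 hsub
  rw [mem_lows] at hxs
  have hallin : (lows n (s+1)).powersetCard l ⊆ 𝒞 := by
    intro B hB
    rw [mem_powersetCard] at hB
    have hxB : x ∉ B := fun hc => hxs (mem_lows.1 (hB.1 hc))
    have hBA : B ≠ A := fun hc => hxB (hc ▸ hxA)
    apply h.2 hA ⟨?_, hB.2⟩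
    rw [Colex.toColex_lt_toColex]
    refine ⟨hBA, fun a ha _ => ⟨x, hxA, hxB, ?_⟩⟩
    have : (a : ℕ) < s + 1 := mem_lows.1 (hB.1 ha)
    exact Fin.le_def.2 (by omega)
  have hAnot : A ∉ (lows n (s+1)).powersetCard l :=
    fun hc => hsub (mem_powersetCard.1 hc).1
  have hins : insert A ((lows n (s+1)).powersetCard l) ⊆ 𝒞 :=
    insert_subset hA hallin
  have hle := card_le_card hins
  rw [card_insert_of_notMem hAnot, card_powersetCard, card_lows hsn] at hle
  omega

private lemma initseg_shadow_local {n k l s : ℕ} (hk : 1 ≤ k) (hkl : k ≤ l) (hls : l ≤ s)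
    (hsn : s + 1 ≤ n) {𝒞 : Finset (Finset (Fin n))} (hC : Colex.IsInitSeg 𝒞 l)
    (h1 : s.choose l ≤ 𝒞.card) (h2 : 𝒞.card ≤ (s+1).choose l) :
    s.choose k * s.choose (l-1) + (𝒞.card - s.choose l) * s.choose (k-1)
      ≤ (∂^[l-k] 𝒞).card * s.choose (l-1) := by
  classical
  set fs : Fin n := ⟨s, hsn⟩ with hfs_def
  have hfsval : (fs : ℕ) = s := rfl
  set 𝒮 := ∂^[l-k] 𝒞 with h𝒮
  -- part 0 : all k-subsets of lows n s are in the iterated shadow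
  have part0 : (lows n s).powersetCard k ⊆ 𝒮 := by
    intro T hT
    rw [mem_powersetCard] at hT
    have hlowcard : l ≤ #(lows n s) := by
      rw [card_lows (show s ≤ n by omega)]; exact hls
    obtain ⟨A, hTA, hAlow, hAcard⟩ :=
      Finset.exists_subsuperset_card_eq hT.1 (hT.2.le.trans hkl) hlowcard
    rw [h𝒮, mem_shadow_iterate_iff_exists_sdiff]
    refine ⟨A, initSeg_mem_of_low (by omega) hC h1 hAlow hAcard, hTA, ?_⟩
    rw [card_sdiff_of_subset hTA, hAcard, hT.2]
  -- the families above level s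
  set 𝒞₁ := 𝒞.filter (fun A => ¬ A ⊆ lows n s) with h𝒞₁
  have h𝒞₀ : 𝒞.filter (fun A => A ⊆ lows n s) = (lows n s).powersetCard l := by
    ext A
    rw [mem_filter, mem_powersetCard]
    constructor
    · rintro ⟨hA, hsub⟩; exact ⟨hsub, hC.1 hA⟩
    · rintro ⟨hsub, hcard⟩; exact ⟨initSeg_mem_of_low (by omega) hC h1 hsub hcard, hsub⟩
  have h𝒞₁card : s.choose l + 𝒞₁.card = 𝒞.card := by
    have h := Finset.card_filter_add_card_filter_not
      (s := 𝒞) (p := fun A => A ⊆ lows n s)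
    rw [h𝒞₀, card_powersetCard, card_lows (show s ≤ n by omega)] at h
    rw [h𝒞₁]
    convert h using 3
  have hmem𝒞₁ : ∀ A ∈ 𝒞₁, fs ∈ A ∧ A.erase fs ⊆ lows n s ∧ (A.erase fs).card = l - 1 := by
    intro A hA
    rw [h𝒞₁, mem_filter] at hA
    have hup : A ⊆ lows n (s+1) := initSeg_subset_low hsn hC h2 A hA.1
    have hfsA : fs ∈ A := by
      obtain ⟨x, hxA, hxlow⟩ := not_subset.1 hA.2
      have : (x : ℕ) < s + 1 := mem_lows.1 (hup hxA)
      have hxval : (x : ℕ) = s := by rw [mem_lows] at hxlow; omega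
      have : x = fs := Fin.ext hxval
      exact this ▸ hxA
    refine ⟨hfsA, ?_, ?_⟩
    · intro x hx
      rw [mem_erase] at hx
      have : (x : ℕ) < s + 1 := mem_lows.1 (hup hx.2)
      rw [mem_lows]
      have : (x : ℕ) ≠ s := fun hc => hx.1 (Fin.ext hc)
      omega
    · rw [card_erase_of_mem hfsA, hC.1 hA.1]
  set ℬ := 𝒞₁.image (fun A => A.erase fs) with hℬ
  have hℬcard : ℬ.card = 𝒞₁.card := by
    rw [hℬ]
    apply card_image_of_injOn
    intro A hA A' hA' h
    have h' : A.erase fs = A'.erase fs := h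
    rw [← Finset.insert_erase (hmem𝒞₁ A hA).1, ← Finset.insert_erase (hmem𝒞₁ A' hA').1, h']
  have hℬprop : ∀ B ∈ ℬ, B ⊆ lows n s ∧ B.card = l - 1 := by
    intro B hB
    rw [hℬ, mem_image] at hB
    obtain ⟨A, hA, rfl⟩ := hB
    exact ⟨(hmem𝒞₁ A hA).2.1, (hmem𝒞₁ A hA).2.2⟩
  set cover := (((lows n s).powersetCard (k-1)).filter (fun A => ∃ B ∈ ℬ, A ⊆ B)) with hcov
  have hlym : ℬ.card * s.choose (k-1) ≤ cover.card * s.choose (l-1) := by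
    have := lym_cover (S := lows n s) (a := k-1) (b := l-1) (by omega) ℬ hℬprop
    rwa [card_lows (by omega)] at this
  -- map cover into the shadow
  have hmap : ∀ T ∈ cover, insert fs T ∈ 𝒮 := by
    intro T hT
    rw [hcov, mem_filter, mem_powersetCard] at hT
    obtain ⟨⟨hTlow, hTcard⟩, B, hB, hTB⟩ := hT
    rw [hℬ, mem_image] at hB
    obtain ⟨A, hA𝒞₁, rfl⟩ := hB
    obtain ⟨hfsA, herlow, hercard⟩ := hmem𝒞₁ A hA𝒞₁
    have hA𝒞 : A ∈ 𝒞 := (mem_filter.1 hA𝒞₁).1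
    have hfsT : fs ∉ T := fun hc => by
      have := mem_lows.1 (hTlow hc); omega
    have hsub : insert fs T ⊆ A := by
      apply insert_subset hfsA (hTB.trans (erase_subset _ _))
    rw [h𝒮, mem_shadow_iterate_iff_exists_sdiff]
    refine ⟨A, hA𝒞, hsub, ?_⟩
    rw [card_sdiff_of_subset hsub, card_insert_of_notMem hfsT, hTcard, hC.1 hA𝒞]
    omega
  have hinj : Set.InjOn (fun T => insert fs T) (cover : Set (Finset (Fin n))) := by
    intro T hT T' hT' h
    have hfsT : fs ∉ T := fun hc => by
      have := mem_lows.1 ((mem_powersetCard.1 (mem_filter.1 hT).1).1 hc); omega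
    have hfsT' : fs ∉ T' := fun hc => by
      have := mem_lows.1 ((mem_powersetCard.1 (mem_filter.1 hT').1).1 hc); omega
    have h' : insert fs T = insert fs T' := h
    rw [← Finset.erase_insert hfsT, ← Finset.erase_insert hfsT', h']
  have hdisj : Disjoint ((lows n s).powersetCard k) (cover.image (insert fs)) := by
    rw [disjoint_right]
    intro T hT hT'
    rw [mem_image] at hT
    obtain ⟨T₀, hT₀, rfl⟩ := hT
    have : fs ∈ insert fs T₀ := mem_insert_self _ _
    have := mem_lows.1 ((mem_powersetCard.1 hT').1 this)
    omega
  have hunion : (lows n s).powersetCard k ∪ cover.image (insert fs) ⊆ 𝒮 := by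
    apply union_subset part0
    intro T hT
    rw [mem_image] at hT
    obtain ⟨T₀, hT₀, rfl⟩ := hT
    exact hmap T₀ hT₀
  have hcard𝒮 : s.choose k + cover.card ≤ 𝒮.card := by
    have := card_le_card hunion
    rw [card_union_of_disjoint hdisj, card_image_of_injOn hinj,
      card_powersetCard, card_lows (by omega)] at this
    exact this
  -- final combination
  have final :
      s.choose k * s.choose (l-1) + (𝒞.card - s.choose l) * s.choose (k-1)
        ≤ (s.choose k + cover.card) * s.choose (l-1) := by
    rw [add_mul]
    have : (𝒞.card - s.choose l) * s.choose (k-1) ≤ cover.card * s.choose (l-1) := by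
      have he : 𝒞.card - s.choose l = ℬ.card := by omega
      rw [he]; exact hlym
    omega
  exact final.trans (Nat.mul_le_mul_right _ hcard𝒮)

/-- combine two slope inequalities into "point above chord" -/
private lemma chord_combine {A B u v U V : ℤ} (hA : 0 < A) (hB : 0 ≤ B) (hu : 0 ≤ u)
    (huU : u ≤ U) (hi : u * B ≤ v * A) (hii : (V - v) * A ≤ (U - u) * B) :
    u * V ≤ v * U := by
  have p1 : u * ((V - v) * A) ≤ u * ((U - u) * B) := mul_le_mul_of_nonneg_left hii hu
  have p2 : (U - u) * (u * B) ≤ (U - u) * (v * A) :=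
    mul_le_mul_of_nonneg_left hi (by linarith)
  have key : (u * V) * A ≤ (v * U) * A := by nlinarith
  exact le_of_mul_le_mul_right key hA

private lemma final_combine {P Q A B m X L U V : ℤ} (hA : 0 < A) (hmP : P ≤ m)
    (hmup : m ≤ P + A) (hU1 : 1 ≤ U)
    (bp_s : (P - 1) * (V - L) ≤ (Q - L) * (U - 1))
    (bp_s1 : (P + A - 1) * (V - L) ≤ (Q + B - L) * (U - 1))
    (loc : Q * A + (m - P) * B ≤ X * A) :
    (m - 1) * (V - L) ≤ (X - L) * (U - 1) := by
  have p1 := mul_le_mul_of_nonneg_left bp_s (show (0:ℤ) ≤ P + A - m by linarith)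
  have p2 := mul_le_mul_of_nonneg_left bp_s1 (show (0:ℤ) ≤ m - P by linarith)
  have p3 := mul_le_mul_of_nonneg_right loc (show (0:ℤ) ≤ U - 1 by linarith)
  have key : ((m-1)*(V-L))*A ≤ ((X-L)*(U-1))*A := by nlinarith [p1, p2, p3]
  exact le_of_mul_le_mul_right key hA

private lemma initseg_global {n k l : ℕ} (hk : 2 ≤ k) (hkl : k ≤ l) (hn : k + l = n)
    {𝒞 : Finset (Finset (Fin n))} (hC : Colex.IsInitSeg 𝒞 l)
    (h1 : 1 ≤ 𝒞.card) (h2 : 𝒞.card ≤ (n-1).choose l) :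
    ((𝒞.card : ℤ) - 1) * ((n-1).choose k - l.choose k)
      ≤ (((∂^[l-k] 𝒞).card : ℤ) - l.choose k) * ((n-1).choose l - 1) := by
  -- find the piece s
  have hln : l < n - 1 := by omega
  set P := (range (n-1)).filter (fun s => s.choose l ≤ 𝒞.card) with hP
  have hlP : l ∈ P := by
    rw [hP, mem_filter, mem_range, Nat.choose_self]
    exact ⟨hln, h1⟩
  have hPne : P.Nonempty := ⟨l, hlP⟩
  set s := P.max' hPne with hs
  have hsP : s ∈ P := P.max'_mem hPne
  have hls : l ≤ s := P.le_max' l hlP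
  rw [hP, mem_filter, mem_range] at hsP
  obtain ⟨hsn1, hsm⟩ := hsP
  have hsn : s + 1 ≤ n := by omega
  have hmup : 𝒞.card ≤ (s+1).choose l := by
    by_cases hc : s + 1 < n - 1
    · by_contra hcon
      have : s + 1 ∈ P := by rw [hP, mem_filter, mem_range]; exact ⟨hc, by omega⟩
      have := P.le_max' _ this
      omega
    · have : s + 1 = n - 1 := by omega
      rw [this]; exact h2
  have local_bd := initseg_shadow_local (by omega) hkl hls hsn hC hsm hmup
  -- breakpoint inequalities
  have bpl_s := slope_left (k := k) (l := l) (u := l) (s := s) (by omega) hkl le_rfl hls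
  have bpr_s := slope_right (k := k) (l := l) (s := s) (t := n-1) (by omega) hkl hls (by omega)
  have bpl_s1 := slope_left (k := k) (l := l) (u := l) (s := s+1) (by omega) hkl le_rfl (by omega)
  have bpr_s1 := slope_right (k := k) (l := l) (s := s+1) (t := n-1) (by omega) hkl (by omega)
    (by omega)
  rw [Nat.choose_self] at bpl_s bpl_s1
  -- cast everything to ℤ
  have hA : (0:ℤ) < s.choose (l-1) := by
    exact_mod_cast Nat.choose_pos (show l - 1 ≤ s by omega)
  have hB : (0:ℤ) ≤ s.choose (k-1) := by positivity
  have hA1 : (0:ℤ) < (s+1).choose (l-1) := by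
    exact_mod_cast Nat.choose_pos (show l - 1 ≤ s+1 by omega)
  have hB1 : (0:ℤ) ≤ (s+1).choose (k-1) := by positivity
  have hclP : 1 ≤ s.choose l := Nat.choose_pos hls
  have hu : (0:ℤ) ≤ (s.choose l : ℤ) - 1 := by
    have : (1:ℤ) ≤ (s.choose l : ℤ) := by exact_mod_cast hclP
    linarith
  have hclP1 : 1 ≤ (s+1).choose l := Nat.choose_pos (by omega)
  have hu1 : (0:ℤ) ≤ ((s+1).choose l : ℤ) - 1 := by
    have : (1:ℤ) ≤ ((s+1).choose l : ℤ) := by exact_mod_cast hclP1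
    linarith
  have huU : ((s.choose l : ℤ)) - 1 ≤ ((n-1).choose l : ℤ) - 1 := by
    have : s.choose l ≤ (n-1).choose l := Nat.choose_le_choose l (by omega)
    have : (s.choose l : ℤ) ≤ ((n-1).choose l : ℤ) := by exact_mod_cast this
    linarith
  have huU1 : (((s+1).choose l : ℤ)) - 1 ≤ ((n-1).choose l : ℤ) - 1 := by
    have : (s+1).choose l ≤ (n-1).choose l := Nat.choose_le_choose l (by omega)
    have : ((s+1).choose l : ℤ) ≤ ((n-1).choose l : ℤ) := by exact_mod_cast this
    linarith
  -- breakpoint at s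
  have hi_s : ((s.choose l : ℤ) - 1) * (s.choose (k-1) : ℤ)
      ≤ ((s.choose k : ℤ) - (l.choose k : ℤ)) * (s.choose (l-1) : ℤ) := by
    have := bpl_s
    have hz : (l.choose k * s.choose (l-1) + s.choose l * s.choose (k-1) : ℤ)
        ≤ (s.choose k * s.choose (l-1) + 1 * s.choose (k-1) : ℤ) := by exact_mod_cast this
    linarith [hz]
  have hii_s : (((n-1).choose k : ℤ) - (l.choose k : ℤ) - ((s.choose k : ℤ) - (l.choose k : ℤ)))
        * (s.choose (l-1) : ℤ)
      ≤ (((n-1).choose l : ℤ) - 1 - ((s.choose l : ℤ) - 1)) * (s.choose (k-1) : ℤ) := by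
    have hz : ((n-1).choose k * s.choose (l-1) + s.choose l * s.choose (k-1) : ℤ)
        ≤ ((n-1).choose l * s.choose (k-1) + s.choose k * s.choose (l-1) : ℤ) := by
      exact_mod_cast bpr_s
    linarith [hz]
  have bp_s : ((s.choose l : ℤ) - 1) * (((n-1).choose k : ℤ) - (l.choose k : ℤ))
      ≤ ((s.choose k : ℤ) - (l.choose k : ℤ)) * (((n-1).choose l : ℤ) - 1) :=
    chord_combine hA hB hu huU hi_s hii_s
  -- breakpoint at s+1
  have hi_s1 : (((s+1).choose l : ℤ) - 1) * ((s+1).choose (k-1) : ℤ)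
      ≤ (((s+1).choose k : ℤ) - (l.choose k : ℤ)) * ((s+1).choose (l-1) : ℤ) := by
    have hz : (l.choose k * (s+1).choose (l-1) + (s+1).choose l * (s+1).choose (k-1) : ℤ)
        ≤ ((s+1).choose k * (s+1).choose (l-1) + 1 * (s+1).choose (k-1) : ℤ) := by
      exact_mod_cast bpl_s1
    linarith [hz]
  have hii_s1 : (((n-1).choose k : ℤ) - (l.choose k : ℤ) - (((s+1).choose k : ℤ) - (l.choose k : ℤ)))
        * ((s+1).choose (l-1) : ℤ)
      ≤ (((n-1).choose l : ℤ) - 1 - (((s+1).choose l : ℤ) - 1)) * ((s+1).choose (k-1) : ℤ) := by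
    have hz : ((n-1).choose k * (s+1).choose (l-1) + (s+1).choose l * (s+1).choose (k-1) : ℤ)
        ≤ ((n-1).choose l * (s+1).choose (k-1) + (s+1).choose k * (s+1).choose (l-1) : ℤ) := by
      exact_mod_cast bpr_s1
    linarith [hz]
  have bp_s1 : (((s+1).choose l : ℤ) - 1) * (((n-1).choose k : ℤ) - (l.choose k : ℤ))
      ≤ (((s+1).choose k : ℤ) - (l.choose k : ℤ)) * (((n-1).choose l : ℤ) - 1) :=
    chord_combine hA1 hB1 hu1 huU1 hi_s1 hii_s1
  -- cast the local bound
  have locZ : (s.choose k : ℤ) * (s.choose (l-1) : ℤ)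
        + ((𝒞.card : ℤ) - (s.choose l : ℤ)) * (s.choose (k-1) : ℤ)
      ≤ ((∂^[l-k] 𝒞).card : ℤ) * (s.choose (l-1) : ℤ) := by
    have := local_bd
    have hz := Nat.cast_le (α := ℤ) |>.2 this
    push_cast [Nat.cast_sub hsm] at hz
    linarith [hz]
  -- pascal in ℤ
  have pasl : ((s+1).choose l : ℤ) = (s.choose l : ℤ) + (s.choose (l-1) : ℤ) := by
    exact_mod_cast pascal (show 1 ≤ l by omega)
  have pask : ((s+1).choose k : ℤ) = (s.choose k : ℤ) + (s.choose (k-1) : ℤ) := by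
    exact_mod_cast pascal (show 1 ≤ k by omega)
  rw [pasl, pask] at bp_s1
  have hmP : (s.choose l : ℤ) ≤ (𝒞.card : ℤ) := by exact_mod_cast hsm
  have hmup' : (𝒞.card : ℤ) ≤ (s.choose l : ℤ) + (s.choose (l-1) : ℤ) := by
    rw [← pasl]; exact_mod_cast hmup
  have hU1 : (1:ℤ) ≤ ((n-1).choose l : ℤ) := by
    exact_mod_cast Nat.choose_pos (show l ≤ n-1 by omega)
  exact final_combine hA hmP hmup' hU1 bp_s bp_s1 locZ

private lemma shadow_global {n k l : ℕ} (hk : 2 ≤ k) (hkl : k ≤ l) (hn : k + l = n)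
    (𝒢 : Finset (Finset (Fin n))) (h𝒢 : (𝒢 : Set (Finset (Fin n))).Sized l)
    (h1 : 1 ≤ 𝒢.card) (h2 : 𝒢.card ≤ (n-1).choose l) :
    ((𝒢.card : ℤ) - 1) * ((n-1).choose k - l.choose k)
      ≤ (((∂^[l-k] 𝒢).card : ℤ) - l.choose k) * ((n-1).choose l - 1) := by
  obtain ⟨𝒞, hCseg, hCcard⟩ := exists_initSeg n l 𝒢.card
    (le_trans h2 (Nat.choose_le_choose l (by omega)))
  have hKK : (∂^[l-k] 𝒞).card ≤ (∂^[l-k] 𝒢).card :=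
    Finset.iterated_kk h𝒢 (le_of_eq hCcard) hCseg
  have hglob := initseg_global hk hkl hn hCseg (hCcard ▸ h1) (hCcard ▸ h2)
  rw [hCcard] at hglob
  refine hglob.trans ?_
  have hU1 : (1:ℤ) ≤ ((n-1).choose l : ℤ) := by
    exact_mod_cast Nat.choose_pos (show l ≤ n-1 by omega)
  have : ((∂^[l-k] 𝒞).card : ℤ) ≤ ((∂^[l-k] 𝒢).card : ℤ) := by exact_mod_cast hKK
  apply mul_le_mul_of_nonneg_right (by linarith) (by linarith)

private def toFin (n : ℕ) (A : Finset ℕ) : Finset (Fin n) := univ.filter (fun x => (x:ℕ) ∈ A)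

private lemma mem_toFin {n : ℕ} {A : Finset ℕ} {x : Fin n} : x ∈ toFin n A ↔ (x:ℕ) ∈ A := by
  simp [toFin]

private lemma card_toFin {n : ℕ} {A : Finset ℕ} (h : A ⊆ range n) : (toFin n A).card = A.card := by
  apply Finset.card_bij (fun (i : Fin n) _ => (i : ℕ))
  · intro a ha; exact mem_toFin.1 ha
  · intro a _ b _ hab; exact Fin.val_injective hab
  · intro b hb
    have : b < n := mem_range.1 (h hb)
    exact ⟨⟨b, this⟩, mem_toFin.2 hb, rfl⟩

private lemma toFin_inj {n : ℕ} {A B : Finset ℕ} (hA : A ⊆ range n) (hB : B ⊆ range n)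
    (h : toFin n A = toFin n B) : A = B := by
  ext x
  constructor
  · intro hx
    have hxn : x < n := mem_range.1 (hA hx)
    have : (⟨x, hxn⟩ : Fin n) ∈ toFin n A := mem_toFin.2 hx
    exact mem_toFin.1 (h ▸ this)
  · intro hx
    have hxn : x < n := mem_range.1 (hB hx)
    have : (⟨x, hxn⟩ : Fin n) ∈ toFin n B := mem_toFin.2 hx
    exact mem_toFin.1 (h.symm ▸ this)

private lemma key_lemma {n k l : ℕ} (hk : 2 ≤ k) (hkl : k ≤ l) (hn : k + l = n)
    {F G : Finset (Finset ℕ)} (hF : F ⊆ (range n).powersetCard k)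
    (hG : G ⊆ (range n).powersetCard k)
    (hcross : ∀ A ∈ F, ∀ B ∈ G, (A ∩ B).Nonempty)
    {m : ℕ} (h1m : 1 ≤ m) (hmG : m ≤ G.card) (hmM : m ≤ (n-1).choose (k-1)) :
    ((m:ℤ) - 1) * ((n-1).choose k - l.choose k)
      ≤ ((n.choose k : ℤ) - F.card - l.choose k) * (((n-1).choose (k-1) : ℤ) - 1) := by
  classical
  have hsymm : (n-1).choose l = (n-1).choose (k-1) := by
    have h1 : k - 1 ≤ n - 1 := by omega
    have h2 : (n-1) - (k-1) = l := by omega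
    rw [← h2]
    exact Nat.choose_symm h1
  obtain ⟨G', hG'sub, hG'card⟩ := Finset.exists_subset_card_eq hmG
  set 𝒢 := G'.image (fun B => (univ : Finset (Fin n)) \ toFin n B) with h𝒢def
  have hGmem : ∀ B ∈ G', B ⊆ range n ∧ B.card = k := by
    intro B hB
    have := mem_powersetCard.1 (hG (hG'sub hB))
    exact this
  have h𝒢card : 𝒢.card = m := by
    rw [h𝒢def, ← hG'card]
    apply card_image_of_injOn
    intro B hB B' hB' h
    simp only at h
    have h2 : toFin n B = toFin n B' := by
      have := congrArg (fun X => (univ : Finset (Fin n)) \ X) h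
      simpa [sdiff_sdiff_right_self, inf_eq_inter, univ_inter] using this
    exact toFin_inj (hGmem B hB).1 (hGmem B' hB').1 h2
  have h𝒢sized : (𝒢 : Set (Finset (Fin n))).Sized l := by
    intro C hC
    rw [h𝒢def, coe_image, Set.mem_image] at hC
    obtain ⟨B, hB, rfl⟩ := hC
    rw [card_sdiff_of_subset (subset_univ _), card_univ, Fintype.card_fin,
      card_toFin (hGmem B hB).1, (hGmem B hB).2]
    omega
  have hglob := shadow_global hk hkl hn 𝒢 h𝒢sized (by omega) (by rw [h𝒢card, hsymm]; exact hmM)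
  rw [h𝒢card] at hglob
  -- disjointness: F's images avoid the iterated shadow
  have hdisj : ∀ A ∈ F, toFin n A ∉ ∂^[l-k] 𝒢 := by
    intro A hA hc
    rw [mem_shadow_iterate_iff_exists_sdiff] at hc
    obtain ⟨C, hC, hsub, -⟩ := hc
    rw [h𝒢def, mem_image] at hC
    obtain ⟨B, hB, rfl⟩ := hC
    obtain ⟨x, hx⟩ := hcross A hA B (hG'sub hB)
    rw [mem_inter] at hx
    have hxn : x < n := mem_range.1 ((hGmem B hB).1 hx.2)
    have h1 : (⟨x, hxn⟩ : Fin n) ∈ toFin n A := mem_toFin.2 hx.1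
    have h2 := hsub h1
    rw [mem_sdiff, mem_toFin] at h2
    exact h2.2 hx.2
  -- cardinality bound
  have hcount : F.card + (∂^[l-k] 𝒢).card ≤ n.choose k := by
    have himg : F.image (toFin n) ∪ ∂^[l-k] 𝒢 ⊆ (univ : Finset (Fin n)).powersetCard k := by
      apply union_subset
      · intro T hT
        rw [mem_image] at hT
        obtain ⟨A, hA, rfl⟩ := hT
        rw [mem_powersetCard]
        have := mem_powersetCard.1 (hF hA)
        exact ⟨subset_univ _, by rw [card_toFin this.1]; exact this.2⟩
      · intro T hT
        rw [mem_shadow_iterate_iff_exists_sdiff] at hT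
        obtain ⟨C, hC, hsub, hcard⟩ := hT
        rw [mem_powersetCard]
        refine ⟨subset_univ _, ?_⟩
        have hc := h𝒢sized hC
        have := card_sdiff_of_subset hsub
        have hTC : T.card ≤ C.card := card_le_card hsub
        omega
    have hdisj2 : Disjoint (F.image (toFin n)) (∂^[l-k] 𝒢) := by
      rw [disjoint_left]
      intro T hT hT'
      rw [mem_image] at hT
      obtain ⟨A, hA, rfl⟩ := hT
      exact hdisj A hA hT'
    have hFimg : (F.image (toFin n)).card = F.card := by
      apply card_image_of_injOn
      intro A hA A' hA' h
      exact toFin_inj (mem_powersetCard.1 (hF hA)).1 (mem_powersetCard.1 (hF hA')).1 h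
    have := card_le_card himg
    rw [card_union_of_disjoint hdisj2, hFimg, card_powersetCard, card_univ,
      Fintype.card_fin] at this
    exact this
  -- combine
  have hXle : ((∂^[l-k] 𝒢).card : ℤ) ≤ (n.choose k : ℤ) - F.card := by
    have : (F.card + (∂^[l-k] 𝒢).card : ℤ) ≤ (n.choose k : ℤ) := by exact_mod_cast hcount
    linarith
  have hU1 : (1:ℤ) ≤ ((n-1).choose l : ℤ) := by
    exact_mod_cast Nat.choose_pos (show l ≤ n-1 by omega)
  rw [hsymm] at hglob hU1
  refine hglob.trans ?_
  apply mul_le_mul_of_nonneg_right (by linarith) (by linarith)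

end AuxLemmas

theorem stmt4 (n k r : ℕ) (hn : 2 * k ≤ n) (hr : 2 ≤ r)
    (𝓕 : Fin r → Finset (Finset ℕ))
    (hsub : ∀ i, 𝓕 i ⊆ (Finset.range n).powersetCard k)
    (hne : ∀ i, (𝓕 i).Nonempty)
    (hcross : ∀ i j, i ≠ j → ∀ A ∈ 𝓕 i, ∀ B ∈ 𝓕 j, (A ∩ B).Nonempty) :
    ∑ i, (𝓕 i).card ≤
      max (n.choose k - (n - k).choose k + r - 1) (r * (n - 1).choose (k - 1)) := by
  classical
  have hi01 : (⟨0, by omega⟩ : Fin r) ≠ (⟨1, by omega⟩ : Fin r) := by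
    simp [Fin.ext_iff]
  -- k = 0 is contradictory
  rcases Nat.eq_zero_or_pos k with rfl | hk0
  · obtain ⟨A, hA⟩ := hne ⟨0, by omega⟩
    obtain ⟨B, hB⟩ := hne ⟨1, by omega⟩
    have hAe : A = ∅ := by
      have := (mem_powersetCard.1 (hsub _ hA)).2
      exact card_eq_zero.1 this
    obtain ⟨x, hx⟩ := hcross _ _ hi01 A hA B hB
    rw [hAe] at hx
    simp at hx
  -- k = 1
  rcases eq_or_lt_of_le (show 1 ≤ k from hk0) with hk1 | hk2
  · have hk1 : k = 1 := hk1.symm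
    subst hk1
    have hone : ∀ i, (𝓕 i).card = 1 := by
      intro i
      have hle : (𝓕 i).card ≤ 1 := by
        rw [card_le_one]
        intro A hA A' hA'
        have hj : ∃ j : Fin r, j ≠ i := by
          by_cases h : i = ⟨0, by omega⟩
          · exact ⟨⟨1, by omega⟩, h ▸ hi01.symm⟩
          · exact ⟨⟨0, by omega⟩, fun hc => h hc.symm⟩
        obtain ⟨j, hj⟩ := hj
        obtain ⟨B, hB⟩ := hne j
        obtain ⟨x, hx⟩ := hcross i j (Ne.symm hj) A hA B hB
        obtain ⟨y, hy⟩ := hcross i j (Ne.symm hj) A' hA' B hB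
        rw [mem_inter] at hx hy
        obtain ⟨aa, ha⟩ := card_eq_one.1 (mem_powersetCard.1 (hsub i hA)).2
        obtain ⟨aa', ha'⟩ := card_eq_one.1 (mem_powersetCard.1 (hsub i hA')).2
        obtain ⟨bb, hb⟩ := card_eq_one.1 (mem_powersetCard.1 (hsub j hB)).2
        subst ha; subst ha'; subst hb
        simp only [mem_singleton] at hx hy
        have : aa = aa' := by omega
        rw [this]
      have hpos : 0 < (𝓕 i).card := card_pos.2 (hne i)
      omega
    have hsum : ∑ i, (𝓕 i).card = r := by
      rw [Finset.sum_congr rfl (fun i _ => hone i), Finset.sum_const, smul_eq_mul,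
        card_univ, Fintype.card_fin, mul_one]
    rw [hsum]
    refine le_trans ?_ (le_max_right _ _)
    simp
  -- main case k ≥ 2
  have hk : 2 ≤ k := hk2
  set l := n - k with hl
  have hkl : k ≤ l := by omega
  have hnkl : k + l = n := by omega
  have hM1 : 2 ≤ (n-1).choose (k-1) := by
    have h1 : 0 < (n-2).choose (k-1) := Nat.choose_pos (by omega)
    have h2 : 0 < (n-2).choose (k-1-1) := Nat.choose_pos (by omega)
    have hp : (n-1).choose (k-1) = (n-2).choose (k-1) + (n-2).choose (k-1-1) := by
      rw [show n-1 = (n-2)+1 by omega]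
      exact pascal (by omega)
    omega
  have hVpos : l.choose k < (n-1).choose k := by
    have h1 : l.choose k ≤ (n-2).choose k := Nat.choose_le_choose _ (by omega)
    have h2 : (n-1).choose k = (n-2).choose k + (n-2).choose (k-1) := by
      rw [show n-1 = (n-2)+1 by omega]
      exact pascal (by omega)
    have h3 : 0 < (n-2).choose (k-1) := Nat.choose_pos (by omega)
    omega
  have hMid : n.choose k = (n-1).choose k + (n-1).choose (k-1) := by
    conv_lhs => rw [show n = (n-1)+1 by omega]
    exact pascal (by omega)
  have hLle : l.choose k ≤ n.choose k := Nat.choose_le_choose _ (by omega)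
  have hNe : Nonempty (Fin r) := ⟨⟨0, by omega⟩⟩
  obtain ⟨i0, -, hmax⟩ := Finset.exists_max_image (univ : Finset (Fin r))
    (fun i => (𝓕 i).card) univ_nonempty
  by_cases hcase : (𝓕 i0).card ≤ (n-1).choose (k-1)
  · have hsmall : ∑ i, (𝓕 i).card ≤ r * (n-1).choose (k-1) := by
      calc ∑ i, (𝓕 i).card ≤ ∑ _i : Fin r, (n-1).choose (k-1) :=
            Finset.sum_le_sum (fun i _ => (hmax i (mem_univ i)).trans hcase)
        _ = r * (n-1).choose (k-1) := by
            rw [sum_const, card_univ, Fintype.card_fin, smul_eq_mul]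
    exact hsmall.trans (le_max_right _ _)
  push_neg at hcase
  have hM11 : (0:ℤ) < ((n-1).choose (k-1) : ℤ) - 1 := by
    have : (2:ℤ) ≤ ((n-1).choose (k-1) : ℤ) := by exact_mod_cast hM1
    linarith
  have hVZpos : (0:ℤ) < ((n-1).choose k : ℤ) - (l.choose k : ℤ) := by
    have : (l.choose k : ℤ) < ((n-1).choose k : ℤ) := by exact_mod_cast hVpos
    linarith
  -- per-j bounds
  have hkeyj : ∀ j ∈ univ.erase i0,
      (((𝓕 j).card : ℤ) - 1) * (((n-1).choose k : ℤ) - (l.choose k : ℤ))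
        ≤ ((n.choose k : ℤ) - ((𝓕 i0).card : ℤ) - (l.choose k : ℤ))
          * (((n-1).choose (k-1) : ℤ) - 1) := by
    intro j hj
    have hji : i0 ≠ j := (mem_erase.1 hj).1.symm
    have hc := hcross i0 j hji
    have hβM1 : (𝓕 j).card ≤ (n-1).choose (k-1) := by
      by_contra hcon
      push_neg at hcon
      have hkey := key_lemma hk hkl hnkl (hsub i0) (hsub j) hc
        (m := (n-1).choose (k-1)) (by omega) (by omega) le_rfl
      have h2 : (((n-1).choose k : ℤ) - (l.choose k : ℤ))
            * (((n-1).choose (k-1) : ℤ) - 1)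
          ≤ ((n.choose k : ℤ) - ((𝓕 i0).card : ℤ) - (l.choose k : ℤ))
            * (((n-1).choose (k-1) : ℤ) - 1) := by
        calc (((n-1).choose k : ℤ) - (l.choose k : ℤ)) * (((n-1).choose (k-1) : ℤ) - 1)
            = (((n-1).choose (k-1) : ℤ) - 1) * (((n-1).choose k : ℤ) - (l.choose k : ℤ)) := by
              ring
          _ ≤ _ := hkey
      have h3 := le_of_mul_le_mul_right h2 hM11
      have h4 : ((n.choose k : ℤ)) = ((n-1).choose k : ℤ) + ((n-1).choose (k-1) : ℤ) := by
        exact_mod_cast hMid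
      have h5 : ((n-1).choose (k-1) : ℤ) < ((𝓕 i0).card : ℤ) := by exact_mod_cast hcase
      linarith
    exact key_lemma hk hkl hnkl (hsub i0) (hsub j) hc (card_pos.2 (hne j)) le_rfl hβM1
  -- setup sums
  have hsplit : ∑ i, (𝓕 i).card = (𝓕 i0).card + ∑ j ∈ univ.erase i0, (𝓕 j).card :=
    (Finset.add_sum_erase _ _ (mem_univ i0)).symm
  have hcard_er : (univ.erase i0).card = r - 1 := by
    rw [card_erase_of_mem (mem_univ i0), card_univ, Fintype.card_fin]
  have hBr : r - 1 ≤ ∑ j ∈ univ.erase i0, (𝓕 j).card := by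
    calc r - 1 = (univ.erase i0).card * 1 := by omega
      _ ≤ ∑ j ∈ univ.erase i0, (𝓕 j).card := by
          rw [← smul_eq_mul, ← sum_const]
          exact Finset.sum_le_sum (fun j _ => card_pos.2 (hne j))
  have hsumZ : ((∑ j ∈ univ.erase i0, (𝓕 j).card : ℤ) - ((r:ℤ) - 1))
        * (((n-1).choose k : ℤ) - (l.choose k : ℤ))
      ≤ ((r:ℤ) - 1) * (((n.choose k : ℤ) - ((𝓕 i0).card : ℤ) - (l.choose k : ℤ))
          * (((n-1).choose (k-1) : ℤ) - 1)) := by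
    have hsum := Finset.sum_le_sum hkeyj
    rw [sum_const, hcard_er] at hsum
    have hL : ∑ j ∈ univ.erase i0,
          ((((𝓕 j).card : ℤ) - 1) * (((n-1).choose k : ℤ) - (l.choose k : ℤ)))
        = ((∑ j ∈ univ.erase i0, (𝓕 j).card : ℤ) - ((r:ℤ) - 1))
            * (((n-1).choose k : ℤ) - (l.choose k : ℤ)) := by
      rw [← Finset.sum_mul]
      congr 1
      rw [Finset.sum_sub_distrib, sum_const, hcard_er, nsmul_eq_mul, mul_one]
      have hc : ((r - 1 : ℕ) : ℤ) = (r:ℤ) - 1 := by omega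
      rw [hc]
    rw [hL, nsmul_eq_mul] at hsum
    have hc : ((r - 1 : ℕ) : ℤ) = (r:ℤ) - 1 := by omega
    rw [hc] at hsum
    exact hsum
  have haM : ((𝓕 i0).card : ℤ) ≤ (n.choose k : ℤ) - (l.choose k : ℤ) := by
    obtain ⟨j1, hj1⟩ : (univ.erase i0).Nonempty := by
      rw [← card_pos, hcard_er]; omega
    have h := hkeyj j1 hj1
    have hb1 : (0:ℤ) ≤ ((𝓕 j1).card : ℤ) - 1 := by
      have : 1 ≤ (𝓕 j1).card := card_pos.2 (hne j1)
      have : (1:ℤ) ≤ ((𝓕 j1).card : ℤ) := by exact_mod_cast this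
      linarith
    have h0 : (0:ℤ) ≤ ((n.choose k : ℤ) - ((𝓕 i0).card : ℤ) - (l.choose k : ℤ))
        * (((n-1).choose (k-1) : ℤ) - 1) :=
      le_trans (mul_nonneg hb1 hVZpos.le) h
    by_contra hcon
    push_neg at hcon
    have hneg : ((n.choose k : ℤ) - ((𝓕 i0).card : ℤ) - (l.choose k : ℤ)) < 0 := by linarith
    have := mul_neg_of_neg_of_pos hneg hM11
    linarith
  -- final case split
  by_cases hsm : ((r:ℤ) - 1) * (((n-1).choose (k-1) : ℤ) - 1)
      ≤ ((n-1).choose k : ℤ) - (l.choose k : ℤ)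
  · -- bound by M + r - 1
    have h1 : ((∑ j ∈ univ.erase i0, (𝓕 j).card : ℤ) - ((r:ℤ) - 1))
          * (((n-1).choose k : ℤ) - (l.choose k : ℤ))
        ≤ ((n.choose k : ℤ) - ((𝓕 i0).card : ℤ) - (l.choose k : ℤ))
          * (((n-1).choose k : ℤ) - (l.choose k : ℤ)) := by
      refine hsumZ.trans ?_
      have hfac : (0:ℤ) ≤ (n.choose k : ℤ) - ((𝓕 i0).card : ℤ) - (l.choose k : ℤ) := by
        linarith [haM]
      calc ((r:ℤ) - 1) * (((n.choose k : ℤ) - ((𝓕 i0).card : ℤ) - (l.choose k : ℤ))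
              * (((n-1).choose (k-1) : ℤ) - 1))
          = ((n.choose k : ℤ) - ((𝓕 i0).card : ℤ) - (l.choose k : ℤ))
              * (((r:ℤ) - 1) * (((n-1).choose (k-1) : ℤ) - 1)) := by ring
        _ ≤ ((n.choose k : ℤ) - ((𝓕 i0).card : ℤ) - (l.choose k : ℤ))
              * (((n-1).choose k : ℤ) - (l.choose k : ℤ)) :=
            mul_le_mul_of_nonneg_left hsm hfac
    have h2 := le_of_mul_le_mul_right h1 hVZpos
    have hcast : ∑ j ∈ univ.erase i0, (((𝓕 j).card : ℕ) : ℤ)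
        = ((∑ j ∈ univ.erase i0, (𝓕 j).card : ℕ) : ℤ) := by
      push_cast; rfl
    have hfin : ∑ i, (𝓕 i).card ≤ n.choose k - l.choose k + r - 1 := by
      rw [hsplit]
      rw [hcast] at h2
      omega
    exact hfin.trans (le_max_left _ _)
  · push_neg at hsm
    have hx : (n.choose k : ℤ) - (l.choose k : ℤ) - ((𝓕 i0).card : ℤ)
        ≤ (((n-1).choose k : ℤ) - (l.choose k : ℤ)) - 1 := by
      have h4 : ((n.choose k : ℤ)) = ((n-1).choose k : ℤ) + ((n-1).choose (k-1) : ℤ) := by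
        exact_mod_cast hMid
      have h5 : ((n-1).choose (k-1) : ℤ) < ((𝓕 i0).card : ℤ) := by exact_mod_cast hcase
      linarith
    have hprod : (0:ℤ) ≤ (((r:ℤ) - 1) * (((n-1).choose (k-1) : ℤ) - 1)
          - (((n-1).choose k : ℤ) - (l.choose k : ℤ)))
        * ((((n-1).choose k : ℤ) - (l.choose k : ℤ))
          - ((n.choose k : ℤ) - (l.choose k : ℤ) - ((𝓕 i0).card : ℤ))) := by
      apply mul_nonneg
      · linarith
      · linarith
    have hBrZ : ((r:ℤ) - 1) ≤ (∑ j ∈ univ.erase i0, (𝓕 j).card : ℤ) := by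
      have : ((r - 1 : ℕ) : ℤ) ≤ ((∑ j ∈ univ.erase i0, (𝓕 j).card : ℕ) : ℤ) := by
        exact_mod_cast hBr
      push_cast [Nat.cast_sub (show 1 ≤ r by omega)] at this
      linarith
    have h4 : ((n.choose k : ℤ)) = ((n-1).choose k : ℤ) + ((n-1).choose (k-1) : ℤ) := by
      exact_mod_cast hMid
    have hgoalZ : (((𝓕 i0).card : ℤ) + (∑ j ∈ univ.erase i0, (𝓕 j).card : ℤ))
          * (((n-1).choose k : ℤ) - (l.choose k : ℤ))
        ≤ ((r:ℤ) * ((n-1).choose (k-1) : ℤ))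
          * (((n-1).choose k : ℤ) - (l.choose k : ℤ)) := by
      nlinarith [hsumZ, hprod, h4, hx, haM, hVZpos]
    have h5 := le_of_mul_le_mul_right hgoalZ hVZpos
    have hcast : ∑ j ∈ univ.erase i0, (((𝓕 j).card : ℕ) : ℤ)
        = ((∑ j ∈ univ.erase i0, (𝓕 j).card : ℕ) : ℤ) := by
      push_cast; rfl
    have hfin : ∑ i, (𝓕 i).card ≤ r * (n-1).choose (k-1) := by
      rw [hsplit]
      rw [hcast] at h5
      have hmulcast : ((r * (n-1).choose (k-1) : ℕ) : ℤ) = (r:ℤ) * ((n-1).choose (k-1) : ℤ) := by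
        push_cast; ring
      omega
    exact hfin.trans (le_max_right _ _)
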